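/- Let f be a biderivation of gl_n(ℂ) (n ≥ 2). Then f(x, I_n) = 0 and f(I_n, y) = 0 for all trace-zero matrices x, y ∈ sl_n(ℂ). -/

import Mathlib

theorem stmt_11 (n : ℕ) (hn : 2 ≤ n)
    (f : Matrix (Fin n) (Fin n) ℂ →ₗ[ℂ] Matrix (Fin n) (Fin n) ℂ →ₗ[ℂ] Matrix (Fin n) (Fin n) ℂ)
    (hf1 : ∀ x y z : Matrix (Fin n) (Fin n) ℂ,
      f (x * y - y * x) z = (x * f y z - f y z * x) + (f x z * y - y * f x z))
    (hf2 : ∀ x y z : Matrix (Fin n) (Fin n) ℂ,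
      f x (y * z - z * y) = (f x y * z - z * f x y) + (y * f x z - f x z * y)) :
    ∀ x : Matrix (Fin n) (Fin n) ℂ, x.trace = 0 → f x 1 = 0 ∧ f 1 x = 0 := by
  have h0 : 0 < n := by omega
  set M := Matrix (Fin n) (Fin n) ℂ
  -- f y 1 is central
  have hc1 : ∀ y z : M, f y 1 * z = z * f y 1 := by
    intro y z
    have h := hf2 y 1 z
    rw [one_mul, mul_one, sub_self, map_zero, one_mul, mul_one, sub_self, add_zero] at h
    exact sub_eq_zero.mp h.symm
  have hc2 : ∀ z y : M, f 1 z * y = y * f 1 z := by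
    intro z y
    have h := hf1 1 y z
    rw [one_mul, mul_one, sub_self]  at h
    rw [LinearMap.map_zero, LinearMap.zero_apply] at h
    rw [one_mul, mul_one, sub_self, zero_add] at h
    exact sub_eq_zero.mp h.symm
  have hK : ∀ a b : M, f (a * b - b * a) 1 = 0 ∧ f 1 (a * b - b * a) = 0 := by
    intro a b
    constructor
    · rw [hf1, hc1 b a, hc1 a b]; simp
    · rw [hf2, hc2 a b, hc2 b a]; simp
  set K : Submodule ℂ M := LinearMap.ker (f.flip 1) ⊓ LinearMap.ker (f 1) with hKdef
  have hKmem : ∀ a b : M, a * b - b * a ∈ K := by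
    intro a b
    simp only [hKdef, Submodule.mem_inf, LinearMap.mem_ker, LinearMap.flip_apply]
    exact hK a b
  intro x hx
  suffices hxK : x ∈ K by
    simpa only [hKdef, Submodule.mem_inf, LinearMap.mem_ker, LinearMap.flip_apply] using hxK
  set E := fun i j : Fin n => Matrix.single i j (1 : ℂ) with hE
  set z : Fin n := ⟨0, h0⟩
  have hsum2 : ∑ i : Fin n, ∑ j : Fin n, x i j • (if i = j then E z z else 0) = (0 : M) := by
    have hinner : ∀ i : Fin n, ∑ j : Fin n, x i j • (if i = j then E z z else 0)
        = x i i • E z z := by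
      intro i
      simp only [smul_ite, smul_zero]
      rw [Finset.sum_ite_eq Finset.univ i (fun j => x i j • E z z)]
      simp
    simp only [hinner, ← Finset.sum_smul]
    have : ∑ i : Fin n, x i i = x.trace := rfl
    rw [this, hx, zero_smul]
  have key : x = ∑ i : Fin n, ∑ j : Fin n, x i j • (E i j - if i = j then E z z else 0) := by
    simp only [hE] at hsum2
    simp only [smul_sub, Finset.sum_sub_distrib, hsum2, sub_zero, hE,
      Matrix.smul_single, smul_eq_mul, mul_one]
    exact Matrix.matrix_eq_sum_single x
  rw [key]
  apply Submodule.sum_mem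
  intro i _
  apply Submodule.sum_mem
  intro j _
  apply Submodule.smul_mem
  by_cases hij : i = j
  · subst hij
    rw [if_pos rfl]
    have heq : E i i - E z z = E i z * E z i - E z i * E i z := by
      simp [hE]
    rw [heq]; exact hKmem _ _
  · rw [if_neg hij, sub_zero]
    have heq : E i j = E i i * E i j - E i j * E i i := by
      simp only [hE]
      rw [Matrix.single_mul_single_same,
        Matrix.single_mul_single_of_ne (h := Ne.symm hij), sub_zero, one_mul]
    rw [heq]; exact hKmem _ _
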